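/- For all n ≥ 2, a permutation π of {1,…,n} satisfies ssc(π) ≤ n−2 (i.e., π is (n−2)-stack sortable) if and only if π does not end with the suffix n,1. -/

import Mathlib

/-- The largest letter of a word (`0` for the empty word). -/
def listMax (l : List ℕ) : ℕ := l.foldr max 0

lemma listMax_mem {l : List ℕ} (h : l ≠ []) : listMax l ∈ l := by
  induction l with
  | nil => simp at h
  | cons a t ih =>
    rcases eq_or_ne t [] with rfl | ht
    · simp [listMax]
    · have ht' := ih ht
      have hcons : listMax (a :: t) = max a (listMax t) := rfl
      rcases le_total a (listMax t) with hle | hle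
      · rw [hcons, max_eq_right hle]; exact List.mem_cons_of_mem _ ht'
      · rw [hcons, max_eq_left hle]; exact List.mem_cons_self

/-- The stack-sorting operator `S`: `S` of the empty word is the empty word, and
if `π` is nonempty, writing `π = L·m·R` where `m` is the greatest letter of `π`,
then `S(π) = S(L)·S(R)·m`. -/
def stackSort : List ℕ → List ℕ
  | [] => []
  | x :: xs =>
    stackSort ((x :: xs).take ((x :: xs).idxOf (listMax (x :: xs)))) ++
      stackSort ((x :: xs).drop ((x :: xs).idxOf (listMax (x :: xs)) + 1)) ++
      [listMax (x :: xs)]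
termination_by l => l.length
decreasing_by
  · have hm : listMax (x :: xs) ∈ x :: xs := listMax_mem (by simp)
    have hi : (x :: xs).idxOf (listMax (x :: xs)) < (x :: xs).length :=
      List.idxOf_lt_length_iff.mpr hm
    simp only [List.length_take, List.length_cons] at *
    omega
  · simp only [List.length_drop, List.length_cons]
    omega

/-- `π` is a permutation of `{1, …, n}`, viewed as a word containing each of
`1, …, n` exactly once. -/
def IsPermWord (n : ℕ) (π : List ℕ) : Prop := π.Perm (List.range' 1 n)

/-- The stack-sorting complexity of `π`: the least `k ≥ 0` such that `S^k(π)`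
is the identity word `1, 2, …, n` (where `n` is the length of `π`). -/
noncomputable def ssc (π : List ℕ) : ℕ :=
  sInf {k : ℕ | stackSort^[k] π = List.range' 1 π.length}

/-! ### Auxiliary lemmas -/

lemma stackSort_nil : stackSort [] = [] := by rw [stackSort]

lemma le_listMax {l : List ℕ} {a : ℕ} (h : a ∈ l) : a ≤ listMax l := by
  induction l with
  | nil => simp at h
  | cons b t ih =>
    rcases List.mem_cons.mp h with rfl | h
    · exact le_max_left _ _
    · exact le_trans (ih h) (le_max_right _ _)

lemma listMax_le {l : List ℕ} {b : ℕ} (h : ∀ a ∈ l, a ≤ b) : listMax l ≤ b := by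
  induction l with
  | nil => exact Nat.zero_le b
  | cons c t ih =>
    have hc : listMax (c :: t) = max c (listMax t) := rfl
    rw [hc]
    exact max_le (h c (by simp)) (ih fun a ha => h a (by simp [ha]))

lemma indexOf_append_cons {L R : List ℕ} {m : ℕ} (h : m ∉ L) :
    (L ++ m :: R).idxOf m = L.length := by
  induction L with
  | nil => simp
  | cons a t ih =>
    have ha : a ≠ m := by rintro rfl; exact h List.mem_cons_self
    have ht : m ∉ t := fun hm => h (List.mem_cons_of_mem _ hm)
    simp only [List.cons_append, List.idxOf_cons_ne _ ha, ih ht, List.length_cons,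
      Nat.succ_eq_add_one]

lemma stackSort_split {L R : List ℕ} {m : ℕ}
    (hL : ∀ a ∈ L, a < m) (hR : ∀ a ∈ R, a < m) :
    stackSort (L ++ m :: R) = stackSort L ++ stackSort R ++ [m] := by
  have hmem : m ∈ L ++ m :: R := by simp
  have hmax : listMax (L ++ m :: R) = m := by
    refine le_antisymm (listMax_le ?_) (le_listMax hmem)
    intro a ha
    rcases List.mem_append.mp ha with h | h
    · exact (hL a h).le
    · rcases List.mem_cons.mp h with rfl | h
      · exact le_rfl
      · exact (hR a h).le
  have hnot : m ∉ L := fun h => lt_irrefl m (hL m h)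
  have hidx : (L ++ m :: R).idxOf m = L.length := indexOf_append_cons hnot
  obtain ⟨x, xs, e⟩ : ∃ x xs, L ++ m :: R = x :: xs := by
    cases L with
    | nil => exact ⟨m, R, rfl⟩
    | cons a t => exact ⟨a, t ++ m :: R, rfl⟩
  rw [e, stackSort, ← e, hmax, hidx, List.take_left]
  have hdrop : (L ++ m :: R).drop (L.length + 1) = R := by
    simpa using List.drop_append (l₁ := L) (l₂ := m :: R) 1
  rw [hdrop]

lemma stackSort_perm (l : List ℕ) : (stackSort l).Perm l := by
  induction l using stackSort.induct with
  | case1 => simp [stackSort_nil]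
  | case2 x xs ih1 ih2 =>
    have hmem : listMax (x :: xs) ∈ x :: xs := listMax_mem (by simp)
    have hi : (x :: xs).idxOf (listMax (x :: xs)) < (x :: xs).length :=
      List.idxOf_lt_length_iff.mpr hmem
    rw [stackSort]
    set i := (x :: xs).idxOf (listMax (x :: xs)) with hidef
    have hget : (x :: xs)[i] = listMax (x :: xs) := List.getElem_idxOf hi
    have hdecomp : (x :: xs).take i ++ listMax (x :: xs) :: (x :: xs).drop (i + 1) = x :: xs := by
      conv_rhs => rw [← List.take_append_drop i (x :: xs)]
      rw [List.drop_eq_getElem_cons hi, hget]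
    have p1 : (stackSort ((x :: xs).take i) ++ stackSort ((x :: xs).drop (i + 1)) ++
            [listMax (x :: xs)]).Perm
          (((x :: xs).take i ++ (x :: xs).drop (i + 1)) ++ [listMax (x :: xs)]) :=
      (ih1.append ih2).append (List.Perm.refl _)
    have p2 : (((x :: xs).take i ++ (x :: xs).drop (i + 1)) ++ [listMax (x :: xs)]).Perm
          (listMax (x :: xs) :: ((x :: xs).take i ++ (x :: xs).drop (i + 1))) :=
      List.perm_append_singleton _ _
    have p3 : (listMax (x :: xs) :: ((x :: xs).take i ++ (x :: xs).drop (i + 1))).Perm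
          ((x :: xs).take i ++ listMax (x :: xs) :: (x :: xs).drop (i + 1)) :=
      List.perm_middle.symm
    have p4 : ((x :: xs).take i ++ listMax (x :: xs) :: (x :: xs).drop (i + 1)).Perm
          (x :: xs) := by rw [hdecomp]
    exact ((p1.trans p2).trans p3).trans p4

lemma stackSort_iterate_perm (k : ℕ) (l : List ℕ) : (stackSort^[k] l).Perm l := by
  induction k generalizing l with
  | zero => simp
  | succ k ih =>
    rw [Function.iterate_succ_apply]
    exact (ih _).trans (stackSort_perm l)

lemma mem_bound {n : ℕ} {π : List ℕ} (h : π.Perm (List.range' 1 n)) {a : ℕ} (ha : a ∈ π) :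
    1 ≤ a ∧ a ≤ n := by
  have := List.mem_range'_1.mp (h.mem_iff.mp ha)
  omega

lemma range'_concat' {m k : ℕ} (h : k = m + 1) :
    List.range' 1 k = List.range' 1 m ++ [k] := by
  subst h
  rw [List.range'_concat]
  have h1 : 1 + 1 * m = m + 1 := by omega
  rw [h1]

lemma perm_of_concat_perm {a b : List ℕ} {x : ℕ}
    (h : (a ++ [x]).Perm (b ++ [x])) : a.Perm b :=
  ((List.perm_append_singleton x a).symm.trans
    (h.trans (List.perm_append_singleton x b))).cons_inv

lemma concat_last_eq {a b : List ℕ} {x y : ℕ} (h : a ++ [x] = b ++ [y]) : x = y := by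
  have h2 := congrArg List.getLast? h
  rw [List.getLast?_concat, List.getLast?_concat] at h2
  exact Option.some_injective _ h2

lemma concat_inj_left {a b : List ℕ} {x y : ℕ} (h : a ++ [x] = b ++ [y]) : a = b :=
  List.append_inj_left' h rfl

/-- Decompose a permutation word at its greatest letter. -/
lemma exists_decomp {n : ℕ} (hn : 1 ≤ n) {π : List ℕ} (h : π.Perm (List.range' 1 n)) :
    ∃ L R, π = L ++ n :: R ∧ (∀ a ∈ L, a < n) ∧ (∀ a ∈ R, a < n) := by
  have hnodup : π.Nodup := h.nodup_iff.mpr (List.nodup_range')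
  have hmem : n ∈ π := h.mem_iff.mpr (List.mem_range'_1.mpr ⟨hn, by omega⟩)
  obtain ⟨L, R, rfl⟩ := List.append_of_mem hmem
  rw [List.nodup_append] at hnodup
  have hnL : n ∉ L := fun hm => hnodup.2.2 _ hm _ List.mem_cons_self rfl
  have hnR : n ∉ R := (List.nodup_cons.mp hnodup.2.1).1
  refine ⟨L, R, rfl, ?_, ?_⟩
  · intro a ha
    have h1 := (mem_bound (a := a) h (List.mem_append.mpr (Or.inl ha))).2
    have h2 : a ≠ n := fun e => hnL (e ▸ ha)
    omega
  · intro a ha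
    have h1 := (mem_bound (a := a) h
      (List.mem_append.mpr (Or.inr (List.mem_cons_of_mem _ ha)))).2
    have h2 : a ≠ n := fun e => hnR (e ▸ ha)
    omega

lemma stackSort_concat_max {w : List ℕ} (hw : w ≠ []) (hnd : w.Nodup) :
    ∃ u, stackSort w = u ++ [listMax w] := by
  have hmem : listMax w ∈ w := listMax_mem hw
  obtain ⟨A, B, hw2⟩ := List.append_of_mem hmem
  have hnd2 := hw2 ▸ hnd
  rw [List.nodup_append] at hnd2
  have hmA : listMax w ∉ A := fun hm => hnd2.2.2 _ hm _ List.mem_cons_self rfl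
  have hmB : listMax w ∉ B := (List.nodup_cons.mp hnd2.2.1).1
  have hA : ∀ a ∈ A, a < listMax w := by
    intro a ha
    have h1 : a ≤ listMax w := le_listMax (hw2 ▸ List.mem_append.mpr (Or.inl ha))
    have h2 : a ≠ listMax w := fun e => hmA (e ▸ ha)
    omega
  have hB : ∀ a ∈ B, a < listMax w := by
    intro a ha
    have h1 : a ≤ listMax w :=
      le_listMax (hw2 ▸ List.mem_append.mpr (Or.inr (List.mem_cons_of_mem _ ha)))
    have h2 : a ≠ listMax w := fun e => hmB (e ▸ ha)
    omega
  refine ⟨stackSort A ++ stackSort B, ?_⟩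
  conv_lhs => rw [hw2]
  exact stackSort_split hA hB

lemma iterate_stackSort_append {m M : ℕ} (hM : M = m + 1) (k : ℕ) {σ : List ℕ}
    (h : σ.Perm (List.range' 1 m)) :
    stackSort^[k] (σ ++ [M]) = stackSort^[k] σ ++ [M] := by
  induction k generalizing σ with
  | zero => simp
  | succ k ih =>
    rw [Function.iterate_succ_apply, Function.iterate_succ_apply]
    have hσ : ∀ a ∈ σ, a < M := fun a ha => by have := mem_bound h ha; omega
    have hs : stackSort (σ ++ [M]) = stackSort σ ++ [M] := by
      have h2 := stackSort_split (R := []) hσ (by simp)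
      simpa [stackSort_nil] using h2
    rw [hs]
    exact ih ((stackSort_perm σ).trans h)

/-- One step of stack sorting puts the maximum at the end. -/
lemma step_decomp {m M : ℕ} (hM : M = m + 1) {π : List ℕ}
    (h : π.Perm (List.range' 1 M)) :
    ∃ σ, stackSort π = σ ++ [M] ∧ σ.Perm (List.range' 1 m) := by
  obtain ⟨L, R, rfl, hL, hR⟩ := exists_decomp (by omega) h
  refine ⟨stackSort L ++ stackSort R, stackSort_split hL hR, ?_⟩
  apply perm_of_concat_perm (x := M)
  rw [← stackSort_split hL hR, ← range'_concat' hM]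
  exact (stackSort_perm _).trans h

/-- West: `S^{n}` sorts every permutation of length `n + 1`. -/
lemma west : ∀ n : ℕ, ∀ π : List ℕ, π.Perm (List.range' 1 (n + 1)) →
    stackSort^[n] π = List.range' 1 (n + 1) := by
  intro n
  induction n with
  | zero =>
    intro π h
    have h1 : π = [1] := List.perm_singleton.mp h
    simpa using h1
  | succ n ih =>
    intro π h
    obtain ⟨σ, hs, hp⟩ := step_decomp (m := n + 1) rfl h
    rw [Function.iterate_succ_apply, hs, iterate_stackSort_append rfl n hp, ih σ hp,
      ← range'_concat' (m := n + 1) rfl]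

/-- If `π` ends with `n+2, 1`, no `k ≤ n` iterations sort it. -/
lemma lower_bound : ∀ n : ℕ, ∀ π : List ℕ, π.Perm (List.range' 1 (n + 2)) →
    (∃ w : List ℕ, π = w ++ [n + 2, 1]) → ∀ k ≤ n, stackSort^[k] π ≠ List.range' 1 (n + 2) := by
  intro n
  induction n with
  | zero =>
    rintro π h ⟨w, rfl⟩ k hk
    obtain rfl : k = 0 := by omega
    have hlen : w.length + 2 = 2 := by simpa using h.length_eq
    obtain rfl : w = ([] : List ℕ) := by
      cases w with
      | nil => rfl
      | cons a t => simp at hlen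
    simp only [Function.iterate_zero, id_eq, List.nil_append]
    intro hcontra
    rw [show List.range' 1 2 = [1, 2] from rfl] at hcontra
    simp at hcontra
  | succ n ih =>
    rintro π h ⟨w, rfl⟩ k hk
    have h3 : (w ++ [n + 3, 1]).Perm (List.range' 1 (n + 3)) := h
    have hnodup : (w ++ [n + 3, 1]).Nodup := h3.nodup_iff.mpr (List.nodup_range')
    have hnd := hnodup
    rw [List.nodup_append] at hnd
    have hnw : (n + 3) ∉ w := fun hm => hnd.2.2 _ hm _ List.mem_cons_self rfl
    have hW : ∀ a ∈ w, a < n + 3 := by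
      intro a ha
      have h1 := (mem_bound (a := a) h3 (List.mem_append.mpr (Or.inl ha))).2
      have h2 : a ≠ n + 3 := fun e => hnw (e ▸ ha)
      omega
    have hRlt : ∀ a ∈ ([1] : List ℕ), a < n + 3 := by intro a ha; simp at ha; omega
    have hS : stackSort (w ++ [n + 3, 1]) = stackSort w ++ stackSort [1] ++ [n + 3] :=
      stackSort_split hW hRlt
    have hS1 : stackSort [1] = [1] := by
      have h4 := stackSort_split (L := []) (R := []) (m := 1) (by simp) (by simp)
      simpa [stackSort_nil] using h4
    have hwlen : w.length = n + 1 := by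
      have h4 := h3.length_eq
      simp at h4
      omega
    have hwne : w ≠ [] := by intro e; rw [e] at hwlen; simp at hwlen
    have hmw : listMax w = n + 2 := by
      have hmem : (n + 2) ∈ w := by
        have h1 : (n + 2) ∈ w ++ [n + 3, 1] :=
          h3.mem_iff.mpr (List.mem_range'_1.mpr ⟨by omega, by omega⟩)
        rcases List.mem_append.mp h1 with h2 | h2
        · exact h2
        · simp at h2
      refine le_antisymm (listMax_le ?_) (le_listMax hmem)
      intro a ha
      have := hW a ha
      omega
    obtain ⟨u, hu⟩ := stackSort_concat_max hwne hnd.1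
    rw [hmw] at hu
    have hSσ : stackSort (w ++ [n + 3, 1]) = (stackSort w ++ [1]) ++ [n + 3] := by
      rw [hS, hS1]
    have hσperm : (stackSort w ++ [1]).Perm (List.range' 1 (n + 2)) := by
      apply perm_of_concat_perm (x := n + 3)
      rw [← hSσ, ← range'_concat' (m := n + 2) (k := n + 3) rfl]
      exact (stackSort_perm _).trans h3
    have hσsuffix : ∃ v : List ℕ, stackSort w ++ [1] = v ++ [n + 2, 1] := by
      refine ⟨u, ?_⟩
      rw [hu]
      simp
    cases k with
    | zero =>
      simp only [Function.iterate_zero, id_eq]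
      intro hcontra
      rw [range'_concat' (m := n + 2) (k := n + 3) rfl] at hcontra
      have h5 : (w ++ [n + 3]) ++ [1] = List.range' 1 (n + 2) ++ [n + 3] := by
        rw [← hcontra]; simp
      have h6 := concat_last_eq h5
      omega
    | succ k =>
      intro hcontra
      rw [Function.iterate_succ_apply, hSσ,
        iterate_stackSort_append (m := n + 2) rfl k hσperm,
        range'_concat' (m := n + 2) (k := n + 3) rfl] at hcontra
      have h5 : stackSort^[k] (stackSort w ++ [1]) = List.range' 1 (n + 2) :=
        concat_inj_left hcontra
      exact ih (stackSort w ++ [1]) hσperm hσsuffix k (by omega) h5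

/-- If `π` does not end with `n+2, 1`, then `n` iterations sort it. -/
lemma upper_bound : ∀ n : ℕ, ∀ π : List ℕ, π.Perm (List.range' 1 (n + 2)) →
    (¬ ∃ w : List ℕ, π = w ++ [n + 2, 1]) → stackSort^[n] π = List.range' 1 (n + 2) := by
  intro n
  induction n with
  | zero =>
    intro π h hns
    have hlen : π.length = 2 := by simpa using h.length_eq
    obtain ⟨a, b, rfl⟩ : ∃ a b, π = [a, b] := by
      cases π with
      | nil => simp at hlen
      | cons a t =>
        cases t with
        | nil => simp at hlen
        | cons b t2 =>
          cases t2 with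
          | nil => exact ⟨a, b, rfl⟩
          | cons c t3 => simp at hlen
    have ha := mem_bound (a := a) h (by simp)
    have hb := mem_bound (a := b) h (by simp)
    have hne : a ≠ b := by
      have hnd : ([a, b] : List ℕ).Nodup := h.nodup_iff.mpr (List.nodup_range')
      simpa using (List.nodup_cons.mp hnd).1
    have hvals : a = 1 ∧ b = 2 := by
      rcases eq_or_ne a 2 with h1 | h1
      · exfalso
        have hb1 : b = 1 := by omega
        exact hns ⟨[], by rw [h1, hb1]; rfl⟩
      · omega
    obtain ⟨rfl, rfl⟩ := hvals
    rfl
  | succ n ih =>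
    intro π h hns
    have h3 : π.Perm (List.range' 1 (n + 3)) := h
    obtain ⟨L, R, rfl, hL, hR⟩ := exists_decomp (show (1:ℕ) ≤ n + 3 by omega) h3
    have hnodup : (L ++ (n + 3) :: R).Nodup := h3.nodup_iff.mpr (List.nodup_range')
    rw [List.nodup_append] at hnodup
    have hS : stackSort (L ++ (n + 3) :: R) = (stackSort L ++ stackSort R) ++ [n + 3] :=
      stackSort_split hL hR
    have hσperm : (stackSort L ++ stackSort R).Perm (List.range' 1 (n + 2)) := by
      apply perm_of_concat_perm (x := n + 3)
      rw [← hS, ← range'_concat' (m := n + 2) (k := n + 3) rfl]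
      exact (stackSort_perm _).trans h3
    have hσns : ¬ ∃ v : List ℕ, stackSort L ++ stackSort R = v ++ [n + 2, 1] := by
      rintro ⟨v, hv⟩
      cases hRe : R with
      | nil =>
        rw [hRe] at hv
        have hLlen : L.length = n + 2 := by
          have h4 := h3.length_eq
          rw [hRe] at h4
          simp at h4
          omega
        have hLne : L ≠ [] := by intro e; rw [e] at hLlen; simp at hLlen
        obtain ⟨u, hu⟩ := stackSort_concat_max hLne hnodup.1
        have hv' : stackSort L = v ++ [n + 2, 1] := by
          rw [← hv, stackSort_nil]
          simp
        have h5 : u ++ [listMax L] = (v ++ [n + 2]) ++ [1] := by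
          rw [← hu, hv']
          simp
        have h6 := concat_last_eq h5
        have hmL : listMax L = n + 2 := by
          have hmem2 : (n + 2) ∈ L := by
            have h1 : (n + 2) ∈ L ++ (n + 3) :: R :=
              h3.mem_iff.mpr (List.mem_range'_1.mpr ⟨by omega, by omega⟩)
            rcases List.mem_append.mp h1 with h2 | h2
            · exact h2
            · rw [hRe] at h2; simp at h2
          refine le_antisymm (listMax_le ?_) (le_listMax hmem2)
          intro a ha
          have := hL a ha
          omega
        omega
      | cons r rs =>
        have hRne : R ≠ [] := by rw [hRe]; simp
        have hRnd : R.Nodup := (List.nodup_cons.mp hnodup.2.1).2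
        obtain ⟨u, hu⟩ := stackSort_concat_max hRne hRnd
        have h5 : (stackSort L ++ u) ++ [listMax R] = (v ++ [n + 2]) ++ [1] := by
          rw [List.append_assoc, ← hu, hv]
          simp
        have h6 := concat_last_eq h5
        have hR1 : R = [1] := by
          have hall : ∀ a ∈ R, a = 1 := by
            intro a ha
            have h8 : a ≤ listMax R := le_listMax ha
            have h9 := (mem_bound (a := a) h3
              (List.mem_append.mpr (Or.inr (List.mem_cons_of_mem _ ha)))).1
            omega
          rw [hRe] at hall hRnd ⊢
          have hr1 : r = 1 := hall r (by simp)
          cases hrs : rs with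
          | nil => rw [hr1]
          | cons r2 rs2 =>
            exfalso
            rw [hrs] at hall hRnd
            have hr2 : r2 = 1 := hall r2 (by simp)
            have h10 := List.nodup_cons.mp hRnd
            rw [hr1, hr2] at h10
            exact h10.1 (by simp)
        exact hns ⟨L, by rw [hR1]⟩
    have hIH := ih (stackSort L ++ stackSort R) hσperm hσns
    have hgoal : stackSort^[n + 1] (L ++ (n + 3) :: R) = List.range' 1 (n + 3) := by
      rw [Function.iterate_succ_apply, hS,
        iterate_stackSort_append (m := n + 2) rfl n hσperm, hIH,
        ← range'_concat' (m := n + 2) (k := n + 3) rfl]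
    exact hgoal
/-- For all `n ≥ 2`, a permutation `π` of `{1,…,n}` satisfies `ssc(π) ≤ n−2`
(is `(n−2)`-stack sortable) iff `π` does not end with the suffix `n, 1`. -/
theorem n_sub_two_stack_sortable_iff (n : ℕ) (hn : 2 ≤ n) (π : List ℕ) (hπ : IsPermWord n π) :
    ssc π ≤ n - 2 ↔ ¬ ∃ w : List ℕ, π = w ++ [n, 1] := by
  obtain ⟨m, rfl⟩ : ∃ m, n = m + 2 := ⟨n - 2, by omega⟩
  have hperm : π.Perm (List.range' 1 (m + 2)) := hπ
  have hlen : π.length = m + 2 := by simpa using hperm.length_eq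
  have hssc : ssc π = sInf {k : ℕ | stackSort^[k] π = List.range' 1 (m + 2)} := by
    rw [ssc, hlen]
  constructor
  · intro hle hsuf
    have hne : {k : ℕ | stackSort^[k] π = List.range' 1 (m + 2)}.Nonempty :=
      ⟨m + 1, west (m + 1) π hperm⟩
    have hmem := Nat.sInf_mem hne
    have hle2 : sInf {k : ℕ | stackSort^[k] π = List.range' 1 (m + 2)} ≤ m := by
      rw [← hssc]; simpa using hle
    exact lower_bound m π hperm hsuf _ hle2 hmem
  · intro hns
    rw [hssc]
    have h1 : stackSort^[m] π = List.range' 1 (m + 2) := upper_bound m π hperm hns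
    have h2 := Nat.sInf_le (s := {k : ℕ | stackSort^[k] π = List.range' 1 (m + 2)}) h1
    omega
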